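/- If T is a tree on 2k + 2 vertices and G is a simple graph on n vertices that does not contain T as a subgraph, then the number of edges of G is at most 2kn. -/

import Mathlib

open SimpleGraph Finset

/-- The signless Laplacian matrix `Q(G) = D(G) + A(G)` over `ℝ`. -/
def signlessLaplacian {V : Type*} [Fintype V] [DecidableEq V] (G : SimpleGraph V)
    [DecidableRel G.Adj] : Matrix V V ℝ :=
  SimpleGraph.degMatrix ℝ G + G.adjMatrix ℝ

/-- `q` is the largest eigenvalue of the real matrix `M`. -/
def IsMaxEigenvalue {V : Type*} [Fintype V] [DecidableEq V] (M : Matrix V V ℝ) (q : ℝ) : Prop :=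
  Module.End.HasEigenvalue (Matrix.toLin' M) q ∧
    ∀ μ : ℝ, Module.End.HasEigenvalue (Matrix.toLin' M) μ → μ ≤ q

/-- `S_{n,k}`: the join of `K_k` with an empty graph on `n - k` vertices. -/
def Snk (n k : ℕ) : SimpleGraph (Fin n) where
  Adj u v := u ≠ v ∧ (u.val < k ∨ v.val < k)
  symm := ⟨fun u v ⟨h1, h2⟩ => ⟨h1.symm, h2.symm⟩⟩
  loopless := ⟨fun u ⟨h, _⟩ => h rfl⟩

instance (n k : ℕ) : DecidableRel (Snk n k).Adj := fun u v =>
  inferInstanceAs (Decidable (u ≠ v ∧ (u.val < k ∨ v.val < k)))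

/-- `S_{n,k}^+`: `S_{n,k}` plus one edge inside the independent set (between
vertices `k` and `k+1`). -/
def SnkPlus (n k : ℕ) : SimpleGraph (Fin n) where
  Adj u v := u ≠ v ∧ (u.val < k ∨ v.val < k ∨ (u.val ≤ k + 1 ∧ v.val ≤ k + 1))
  symm := ⟨fun u v ⟨h1, h2⟩ => ⟨h1.symm, by tauto⟩⟩
  loopless := ⟨fun u ⟨h, _⟩ => h rfl⟩

instance (n k : ℕ) : DecidableRel (SnkPlus n k).Adj := fun u v =>
  inferInstanceAs (Decidable (u ≠ v ∧ (u.val < k ∨ v.val < k ∨ (u.val ≤ k + 1 ∧ v.val ≤ k + 1))))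

/-- `T` is contained in `G` as a subgraph: there is an injective graph homomorphism. -/
def ContainsSub {α β : Type*} (T : SimpleGraph α) (G : SimpleGraph β) : Prop :=
  ∃ f : T →g G, Function.Injective f

-- exists boundary edge
lemma aux_walk {α : Type*} [DecidableEq α] (T : SimpleGraph α) (t : Finset α) :
    ∀ {a r : α}, a ∉ t → r ∈ t → T.Walk a r → ∃ v ∉ t, ∃ u ∈ t, T.Adj v u := by
  intro a r ha hr w
  induction w with
  | nil => exact absurd hr ha
  | @cons x y z hxy w ih =>
    by_cases hy : y ∈ t
    · exact ⟨x, ha, y, hy, hxy⟩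
    · exact ih hy hr

-- unique neighbor in connected-within-t set
lemma aux_unique {α : Type*} [DecidableEq α] (T : SimpleGraph α) (hA : T.IsAcyclic) {t : Finset α}
    {v u1 u2 : α} (hv : v ∉ t) (h1 : u1 ∈ t) (h2 : u2 ∈ t)
    (ha1 : T.Adj v u1) (ha2 : T.Adj v u2)
    (p : T.Walk u1 u2) (hp : ∀ x ∈ p.support, x ∈ t) : u1 = u2 := by
  by_contra hne
  set q := p.toPath with hq
  have hqs : ∀ x ∈ q.1.support, x ∈ t := fun x hx => hp x (p.support_toPath_subset hx)
  have hvq : v ∉ q.1.support := fun hx => hv (hqs v hx)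
  have path1 : (Walk.cons ha2 (Walk.nil : T.Walk u2 u2)).IsPath := by
    simp [Walk.cons_isPath_iff, ha2.ne]
  have path2 : (Walk.cons ha1 q.1).IsPath := q.2.cons hvq
  have := isAcyclic_iff_path_unique.mp hA ⟨_, path1⟩ ⟨_, path2⟩
  have hlen : (Walk.cons ha2 Walk.nil).length = (Walk.cons ha1 q.1).length :=
    congrArg Walk.length (congrArg Subtype.val this)
  simp [Walk.length_cons] at hlen
  have : q.1.length ≠ 0 := by
    intro h0
    exact hne (Walk.eq_of_length_eq_zero h0)
  exact this (Walk.nil_iff_length_eq.mp hlen)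

lemma aux_embed {α β : Type*} [Fintype α] [Fintype β] [DecidableEq β]
    (T : SimpleGraph α) (hT : T.IsTree) (G : SimpleGraph β) [DecidableRel G.Adj]
    (s : Finset β) (hs : s.Nonempty)
    (hmin : ∀ v ∈ s, Fintype.card α - 1 ≤ (s.filter (G.Adj v)).card) :
    ContainsSub T G := by
  classical
  obtain ⟨r⟩ := hT.isConnected.nonempty
  obtain ⟨b0, hb0⟩ := hs
  have key : ∀ j : ℕ, ∀ t : Finset α, ∀ f : α → β,
      Fintype.card α ≤ t.card + j →
      t.Nonempty →
      (∀ a ∈ t, f a ∈ s) →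
      Set.InjOn f t →
      (∀ a ∈ t, ∀ b ∈ t, T.Adj a b → G.Adj (f a) (f b)) →
      (∀ a ∈ t, ∀ b ∈ t, ∃ w : T.Walk a b, ∀ x ∈ w.support, x ∈ t) →
      ContainsSub T G := by
    intro j
    induction j with
    | zero =>
      intro t f hcard _ _ hinj hhom _
      have htu : t = Finset.univ := Finset.eq_univ_of_card t
        (le_antisymm (Finset.card_le_univ t) (by simpa using hcard))
      refine ⟨⟨f, fun {a b} hab => hhom a (htu ▸ Finset.mem_univ a) b (htu ▸ Finset.mem_univ b) hab⟩, ?_⟩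
      have : Set.InjOn f Set.univ := by rw [← Finset.coe_univ, ← htu]; exact hinj
      exact Set.injOn_univ.mp this
    | succ j ih =>
      intro t f hcard htne hmaps hinj hhom hconn
      by_cases htu : t = Finset.univ
      · have hcard' : Fintype.card α ≤ t.card + j := by
          subst htu; simp
        exact ih t f hcard' htne hmaps hinj hhom hconn
      · -- t is a proper subset; extend
        have hss : t ⊂ Finset.univ := Finset.ssubset_univ_iff.mpr htu
        obtain ⟨a0, _, ha0⟩ := Finset.exists_of_ssubset hss
        obtain ⟨r0, hr0⟩ := htne
        obtain ⟨w0⟩ := hT.isConnected.preconnected a0 r0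
        obtain ⟨v, hv, u, hu, hadj⟩ := aux_walk T t ha0 hr0 w0
        have htcard : t.card < Fintype.card α := by
          simpa using Finset.card_lt_card hss
        -- find a fresh neighbor b of f u
        set A := s.filter (G.Adj (f u)) with hA
        set B := (t.image f).erase (f u) with hB
        have hAcard : Fintype.card α - 1 ≤ A.card := hmin (f u) (hmaps u hu)
        have hBcard : B.card ≤ t.card - 1 := by
          calc B.card ≤ (t.image f).card - 1 := by
                simp [hB, Finset.card_erase_of_mem,
                  Finset.mem_image.mpr ⟨u, hu, rfl⟩]
            _ ≤ t.card - 1 := by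
                have := Finset.card_image_le (s := t) (f := f)
                omega
        have hnotsub : ¬ A ⊆ B := by
          intro hsub
          have := Finset.card_le_card hsub
          have ht1 : 1 ≤ t.card := Finset.card_pos.mpr ⟨r0, hr0⟩
          omega
        obtain ⟨b, hbA, hbB⟩ := Finset.not_subset.mp hnotsub
        have hbs : b ∈ s := (Finset.mem_filter.mp hbA).1
        have hbadj : G.Adj (f u) b := (Finset.mem_filter.mp hbA).2
        have hbne : b ≠ f u := hbadj.ne'
        have hbimg : b ∉ t.image f := fun h => hbB (Finset.mem_erase.mpr ⟨hbne, h⟩)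
        set f' := Function.update f v b with hf'
        have hf'v : f' v = b := Function.update_self v b f
        have hf'old : ∀ a ∈ t, f' a = f a := fun a ha =>
          Function.update_of_ne (fun h => hv (by rw [← h]; exact ha)) b f
        set t' := insert v t with ht'
        -- walk from v to any member of t, within t'
        have hwv : ∀ c ∈ t, ∃ w : T.Walk v c, ∀ x ∈ w.support, x ∈ t' := by
          intro c hc
          obtain ⟨w, hw⟩ := hconn u hu c hc
          exact ⟨Walk.cons hadj w, by
            intro x hx
            rw [Walk.support_cons, List.mem_cons] at hx
            rcases hx with h | h
            · rw [h]; exact Finset.mem_insert_self v t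
            · exact Finset.mem_insert_of_mem (hw x h)⟩
        -- v's only neighbor in t is u
        have huniq : ∀ c ∈ t, T.Adj v c → c = u := by
          intro c hc hvc
          obtain ⟨w, hw⟩ := hconn c hc u hu
          exact aux_unique T hT.IsAcyclic hv hc hu hvc hadj w hw
        refine ih t' f' ?_ ⟨v, Finset.mem_insert_self v t⟩ ?_ ?_ ?_ ?_
        · rw [ht', Finset.card_insert_of_notMem hv]; omega
        · intro a ha
          rcases Finset.mem_insert.mp ha with h | h
          · rw [h, hf'v]; exact hbs
          · rw [hf'old a h]; exact hmaps a h
        · intro a ha c hc hfe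
          have ha' : a ∈ insert v t := ha
          have hc' : c ∈ insert v t := hc
          rcases Finset.mem_insert.mp ha' with h | h <;> rcases Finset.mem_insert.mp hc' with h' | h'
          · rw [h, h']
          · exfalso; rw [h, hf'v, hf'old c h'] at hfe
            exact hbimg (Finset.mem_image.mpr ⟨c, h', hfe.symm⟩)
          · exfalso; rw [h', hf'v, hf'old a h] at hfe
            exact hbimg (Finset.mem_image.mpr ⟨a, h, hfe⟩)
          · rw [hf'old a h, hf'old c h'] at hfe
            exact hinj h h' hfe
        · intro a ha c hc hac
          rcases Finset.mem_insert.mp ha with h | h <;>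
            rcases Finset.mem_insert.mp hc with h' | h'
          · exfalso; rw [h, h'] at hac; exact T.irrefl hac
          · subst h; rw [hf'v, hf'old c h']
            rw [huniq c h' hac]
            exact hbadj.symm
          · subst h'; rw [hf'v, hf'old a h]
            rw [huniq a h hac.symm]
            exact hbadj
          · rw [hf'old a h, hf'old c h']
            exact hhom a h c h' hac
        · intro a ha c hc
          rcases Finset.mem_insert.mp ha with h | h <;>
            rcases Finset.mem_insert.mp hc with h' | h'
          · subst h; subst h'
            exact ⟨Walk.nil, by simp [ht']⟩
          · subst h; exact hwv c h'
          · subst h'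
            obtain ⟨w, hw⟩ := hwv a h
            exact ⟨w.reverse, by
              intro x hx; rw [Walk.support_reverse, List.mem_reverse] at hx
              exact hw x hx⟩
          · obtain ⟨w, hw⟩ := hconn a h c h'
            exact ⟨w, fun x hx => Finset.mem_insert_of_mem (hw x hx)⟩
  refine key (Fintype.card α) {r} (fun _ => b0) (by simp) ⟨r, Finset.mem_singleton_self r⟩
    (fun a ha => hb0) ?_ ?_ ?_
  · intro a ha c hc _
    simp only [Finset.coe_singleton, Set.mem_singleton_iff] at ha hc
    rw [ha, hc]
  · intro a ha c hc hac
    rw [Finset.mem_singleton] at ha hc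
    exfalso; rw [ha, hc] at hac; exact T.irrefl hac
  · intro a ha c hc
    rw [Finset.mem_singleton] at ha hc
    subst ha; subst hc
    exact ⟨Walk.nil, by simp⟩

lemma aux_mindeg {β : Type*} [Fintype β] [DecidableEq β] (G : SimpleGraph β)
    [DecidableRel G.Adj] (k : ℕ)
    (h : 2 * k * Fintype.card β < G.edgeFinset.card) :
    ∃ s : Finset β, s.Nonempty ∧ ∀ v ∈ s, 2 * k + 1 ≤ (s.filter (G.Adj v)).card := by
  classical
  have main : ∀ s : Finset β,
      4 * k * s.card < ∑ a ∈ s, (s.filter (G.Adj a)).card →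
      ∃ s' : Finset β, s'.Nonempty ∧ ∀ v ∈ s', 2 * k + 1 ≤ (s'.filter (G.Adj v)).card := by
    intro s
    induction s using Finset.strongInduction with
    | _ s ih =>
      intro hlt
      by_cases hall : ∀ v ∈ s, 2 * k + 1 ≤ (s.filter (G.Adj v)).card
      · rcases Finset.eq_empty_or_nonempty s with he | hne
        · subst he; simp at hlt
        · exact ⟨s, hne, hall⟩
      · push_neg at hall
        obtain ⟨v, hv, hdeg⟩ := hall
        have hdeg' : (s.filter (G.Adj v)).card ≤ 2 * k := by omega
        -- pointwise bound
        have hpt : ∀ a ∈ s.erase v, (s.filter (G.Adj a)).card ≤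
            ((s.erase v).filter (G.Adj a)).card + (if G.Adj a v then 1 else 0) := by
          intro a _
          by_cases hadj : G.Adj a v
          · rw [if_pos hadj]
            have hsub : s.filter (G.Adj a) ⊆ insert v ((s.erase v).filter (G.Adj a)) := by
              intro x hx
              rw [Finset.mem_filter] at hx
              by_cases hxv : x = v
              · rw [hxv]; exact Finset.mem_insert_self v _
              · exact Finset.mem_insert_of_mem (Finset.mem_filter.mpr
                  ⟨Finset.mem_erase.mpr ⟨hxv, hx.1⟩, hx.2⟩)
            calc (s.filter (G.Adj a)).card ≤ _ := Finset.card_le_card hsub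
              _ ≤ ((s.erase v).filter (G.Adj a)).card + 1 := Finset.card_insert_le _ _
          · rw [if_neg hadj]
            simp only [add_zero]
            apply Finset.card_le_card
            intro x hx
            rw [Finset.mem_filter] at hx
            refine Finset.mem_filter.mpr ⟨Finset.mem_erase.mpr ⟨?_, hx.1⟩, hx.2⟩
            rintro rfl; exact hadj hx.2
        have hsum2 : ∑ a ∈ s.erase v, (s.filter (G.Adj a)).card ≤
            (∑ a ∈ s.erase v, ((s.erase v).filter (G.Adj a)).card) +
            ((s.erase v).filter (fun a => G.Adj a v)).card := by
          calc ∑ a ∈ s.erase v, (s.filter (G.Adj a)).card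
              ≤ ∑ a ∈ s.erase v, (((s.erase v).filter (G.Adj a)).card +
                (if G.Adj a v then 1 else 0)) := Finset.sum_le_sum hpt
            _ = _ := by rw [Finset.sum_add_distrib, Finset.card_filter]
        have hcv : ((s.erase v).filter (fun a => G.Adj a v)).card ≤
            (s.filter (G.Adj v)).card := by
          apply Finset.card_le_card
          intro x hx
          rw [Finset.mem_filter] at hx
          exact Finset.mem_filter.mpr ⟨Finset.mem_of_mem_erase hx.1, hx.2.symm⟩
        have hsplit : ∑ a ∈ s, (s.filter (G.Adj a)).card =
            (s.filter (G.Adj v)).card + ∑ a ∈ s.erase v, (s.filter (G.Adj a)).card :=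
          (Finset.add_sum_erase s _ hv).symm
        have hcard1 : 1 ≤ s.card := Finset.card_pos.mpr ⟨v, hv⟩
        have hec : (s.erase v).card = s.card - 1 := Finset.card_erase_of_mem hv
        obtain ⟨m, hm⟩ : ∃ m, s.card = m + 1 := ⟨s.card - 1, by omega⟩
        have hmul : 4 * k * s.card = 4 * k * (s.erase v).card + 4 * k := by
          rw [hec, hm, Nat.add_sub_cancel]; ring
        apply ih (s.erase v) (Finset.erase_ssubset hv)
        omega
  apply main Finset.univ
  have h1 : ∀ a, ((Finset.univ : Finset β).filter (G.Adj a)).card = G.degree a := by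
    intro a; rw [← neighborFinset_eq_filter]; rfl
  calc 4 * k * (Finset.univ : Finset β).card = 2 * (2 * k * Fintype.card β) := by
        rw [Finset.card_univ]; ring
    _ < 2 * G.edgeFinset.card := by omega
    _ = ∑ a, G.degree a := (G.sum_degrees_eq_twice_card_edges).symm
    _ = ∑ a ∈ Finset.univ, ((Finset.univ : Finset β).filter (G.Adj a)).card := by
        simp [h1]


theorem stmt_4 (k n : ℕ) (hk : 0 < k) {α β : Type*} [Fintype α] [Fintype β] [DecidableEq β]
    (T : SimpleGraph α) (hT : T.IsTree) (hcard : Fintype.card α = 2 * k + 2)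
    (G : SimpleGraph β) [DecidableRel G.Adj] (hn : Fintype.card β = n)
    (hfree : ¬ ContainsSub T G) :
    G.edgeFinset.card ≤ 2 * k * n := by
  classical
  by_contra hlt
  push_neg at hlt
  subst hn
  obtain ⟨s, hsne, hmin⟩ := aux_mindeg G k hlt
  refine hfree (aux_embed T hT G s hsne ?_)
  intro v hv
  rw [hcard]
  have := hmin v hv
  omega
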